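/- Let m ≥ 5 be odd, r ∈ {1,2}, and a ∈ {2,3,…,m}. Then u_{Σ_{ar}}(α) = 1 for all α ∈ ℤ^{2^m}. -/

import Mathlib

open Matrix

/-- `bwBit i a` is the `a`-th binary digit of `i`. -/
def bwBit (i a : ℕ) : ℕ := i / 2 ^ a % 2

/-- `bwPar m i` is the number of zero digits in the length-`m` binary expansion of `i`, mod 2. -/
def bwPar (m i : ℕ) : ℕ := ((Finset.range m).filter fun a => bwBit i a = 0).card % 2

/-- The exponent of `√2` in the `(i,j)` entry of the Gram matrix of `BW(m)`. -/
def bwExp (m i j : ℕ) : ℤ :=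
  (bwPar m i : ℤ) + (bwPar m j : ℤ) - 2 * (((m + 1) / 2 : ℕ) : ℤ) +
    ∑ l ∈ Finset.range m,
      (2 * (bwBit i l : ℤ) * (bwBit j l : ℤ) - (bwBit i l : ℤ) - (bwBit j l : ℤ) + 2)

/-- The Gram matrix of the Barnes-Wall lattice `BW(m)`:
`G i j = (w_i, w_j) = √2 ^ (p i + p j - 2⌈m/2⌉ + ∑ (2 i[l] j[l] - i[l] - j[l] + 2))`. -/
noncomputable def bwGram (m : ℕ) : Matrix (Fin (2 ^ m)) (Fin (2 ^ m)) ℝ :=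
  Matrix.of fun i j => Real.sqrt 2 ^ bwExp m (i : ℕ) (j : ℕ)

/-- The matrix of the lattice automorphism `Σ_{ar}` of `BW(m)` in the basis `w_i`
(acting on row vectors from the right); `r = 1` gives `Σ_{a1}`, any other `r` gives `Σ_{a2}`. -/
def bwSigma (m a r : ℕ) : Matrix (Fin (2 ^ m)) (Fin (2 ^ m)) ℤ :=
  Matrix.of fun i j =>
    if r = 1 then
      if bwBit (i : ℕ) (m - a) = 0 then
        (if j = i then -1 else 0) +
          (if (j : ℕ) = (i : ℕ) + 2 ^ (m - a) then 2 ^ bwPar m (i : ℕ) else 0)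
      else if j = i then 1 else 0
    else
      if bwBit (i : ℕ) (m - a) = 1 then
        (if j = i then -1 else 0) +
          (if (j : ℕ) + 2 ^ (m - a) = (i : ℕ) then 2 ^ bwPar m (i : ℕ) else 0)
      else if j = i then 1 else 0

/-- `A_{ar} = Σ_{ar} - I`. -/
def bwA (m a r : ℕ) : Matrix (Fin (2 ^ m)) (Fin (2 ^ m)) ℤ := bwSigma m a r - 1

/-- The half-Gram matrix `H` of `BW(m)`: `H i j = G i j` for `i > j`, `G i i / 2` on the
diagonal, and `0` above the diagonal. -/
noncomputable def bwH (m : ℕ) : Matrix (Fin (2 ^ m)) (Fin (2 ^ m)) ℝ :=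
  Matrix.of fun i j =>
    if j < i then Real.sqrt 2 ^ bwExp m (i : ℕ) (j : ℕ)
    else if i = j then Real.sqrt 2 ^ (bwExp m (i : ℕ) (i : ℕ) - 2)
    else 0

/-- The matrix `H - Σ H Σᵀ` underlying the bilinear form `B_Σ`. -/
noncomputable def bwBMat (m : ℕ) (S : Matrix (Fin (2 ^ m)) (Fin (2 ^ m)) ℤ) :
    Matrix (Fin (2 ^ m)) (Fin (2 ^ m)) ℝ :=
  bwH m - S.map (Int.cast : ℤ → ℝ) * bwH m * (S.map (Int.cast : ℤ → ℝ))ᵀ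

/-- The bilinear form `B_Σ(α, β) = ∑_{i > j} α_i β_j (H - Σ H Σᵀ)_{ij}`. -/
noncomputable def bwBQuad (m : ℕ) (S : Matrix (Fin (2 ^ m)) (Fin (2 ^ m)) ℤ)
    (α β : Fin (2 ^ m) → ℤ) : ℝ :=
  ∑ i, ∑ j, if j < i then (α i : ℝ) * (β j : ℝ) * bwBMat m S i j else 0

/-- `u_Σ(α) = (-1)^{B_Σ(α,α)}`, rendered as `cos (π B_Σ(α,α))`, which agrees with
`(-1)^k` whenever `B_Σ(α,α)` is the integer `k`. -/
noncomputable def bwU (m : ℕ) (S : Matrix (Fin (2 ^ m)) (Fin (2 ^ m)) ℤ)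
    (α : Fin (2 ^ m) → ℤ) : ℝ :=
  Real.cos (Real.pi * bwBQuad m S α α)



lemma two_pow_pos' (k : ℕ) : 0 < 2 ^ k := Nat.pow_pos (by norm_num)

lemma two_pow_mod_two (k : ℕ) (h : 0 < k) : 2 ^ k % 2 = 0 := by
  rw [Nat.pow_mod]; simp [Nat.zero_pow h]

lemma bwBit_le (i a : ℕ) : bwBit i a ≤ 1 := by
  have := Nat.mod_lt (i / 2^a) (show 0 < 2 by norm_num); unfold bwBit; omega

lemma bwPar_le (m i : ℕ) : bwPar m i ≤ 1 := by
  have := Nat.mod_lt (((Finset.range m).filter fun a => bwBit i a = 0).card) (show 0 < 2 by norm_num)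
  unfold bwPar; omega

-- bit of i + 2^b when bit i b = 0
lemma bwBit_add_pow (i b l : ℕ) (h : bwBit i b = 0) :
    bwBit (i + 2 ^ b) l = if l = b then 1 else bwBit i l := by
  unfold bwBit at *
  rcases lt_trichotomy l b with hl | rfl | hl
  · rw [if_neg hl.ne]
    have hb : 2 ^ b = 2 ^ (b - l) * 2 ^ l := by rw [← pow_add]; congr 1; omega
    rw [hb, Nat.add_mul_div_right _ _ (two_pow_pos' l)]
    have := two_pow_mod_two (b - l) (by omega)
    omega
  · rw [if_pos rfl, Nat.add_div_right _ (two_pow_pos' l)]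
    omega
  · rw [if_neg hl.ne']
    have key : (i + 2 ^ b) / 2 ^ l = i / 2 ^ l := by
      have h1 := Nat.div_add_mod i (2 ^ l)
      set s := i % 2 ^ l with hs
      have hsl : s < 2 ^ l := Nat.mod_lt _ (two_pow_pos' l)
      have h2 : 2 ^ l = 2 ^ b * 2 ^ (l - b) := by rw [← pow_add]; congr 1; omega
      have hsb : s / 2 ^ b % 2 = 0 := by
        have : s / 2 ^ b = i / 2 ^ b % 2 ^ (l - b) := by
          rw [hs, h2, Nat.mod_mul_right_div_self]
        rw [this, Nat.mod_mod_of_dvd _ (dvd_pow_self 2 (by omega : l - b ≠ 0))]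
        exact h
      have hq : s / 2 ^ b < 2 ^ (l - b) := by
        apply Nat.div_lt_of_lt_mul; rw [← h2]; exact hsl
      have he := two_pow_mod_two (l - b) (by omega)
      have hq2 : s / 2 ^ b + 2 ≤ 2 ^ (l - b) := by omega
      have hdm := Nat.div_add_mod s (2 ^ b)
      have hmo : s % 2 ^ b < 2 ^ b := Nat.mod_lt _ (two_pow_pos' b)
      have hlt : s + 2 ^ b < 2 ^ l := by
        calc s + 2 ^ b = 2 ^ b * (s / 2 ^ b) + s % 2 ^ b + 2 ^ b := by omega
        _ < 2 ^ b * (s / 2 ^ b + 2) := by ring_nf; omega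
        _ ≤ 2 ^ b * 2 ^ (l - b) := Nat.mul_le_mul_left _ hq2
        _ = 2 ^ l := h2.symm
      calc (i + 2 ^ b) / 2 ^ l = (2 ^ l * (i / 2^l) + (s + 2 ^ b)) / 2 ^ l := by
            congr 1; omega
      _ = i / 2 ^ l + (s + 2^b) / 2 ^ l := by rw [Nat.mul_add_div (two_pow_pos' l)]
      _ = i / 2 ^ l := by rw [Nat.div_eq_of_lt hlt]; omega
    rw [key]

-- staying below 2^m
lemma bwAdd_lt (m i b : ℕ) (hi : i < 2 ^ m) (hb : b < m) (h : bwBit i b = 0) :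
    i + 2 ^ b < 2 ^ m := by
  have h1 := Nat.div_add_mod i (2 ^ b)
  have hmo : i % 2 ^ b < 2 ^ b := Nat.mod_lt _ (two_pow_pos' b)
  have h2 : 2 ^ m = 2 ^ b * 2 ^ (m - b) := by rw [← pow_add]; congr 1; omega
  have hq : i / 2 ^ b < 2 ^ (m - b) := by
    apply Nat.div_lt_of_lt_mul; rw [← h2]; exact hi
  have he := two_pow_mod_two (m - b) (by omega)
  unfold bwBit at h
  have hq2 : i / 2 ^ b + 2 ≤ 2 ^ (m - b) := by omega
  calc i + 2 ^ b = 2 ^ b * (i / 2 ^ b) + i % 2 ^ b + 2 ^ b := by omega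
  _ < 2 ^ b * (i / 2 ^ b + 2) := by ring_nf; omega
  _ ≤ 2 ^ b * 2 ^ (m - b) := Nat.mul_le_mul_left _ hq2
  _ = 2 ^ m := h2.symm

-- bit 1 implies 2^b ≤ i
lemma bwBit_one_le (i b : ℕ) (h : bwBit i b = 1) : 2 ^ b ≤ i := by
  unfold bwBit at h
  have h1 := Nat.div_add_mod i (2 ^ b)
  have : 1 ≤ i / 2 ^ b := by
    rcases Nat.eq_zero_or_pos (i / 2 ^ b) with hz | hp
    · rw [hz] at h; simp at h
    · exact hp
  calc 2 ^ b = 2 ^ b * 1 := by ring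
  _ ≤ 2 ^ b * (i / 2 ^ b) := Nat.mul_le_mul_left _ this
  _ ≤ i := by omega

lemma bwBit_sub_pow (i b : ℕ) (h : bwBit i b = 1) : bwBit (i - 2 ^ b) b = 0 := by
  have hle := bwBit_one_le i b h
  unfold bwBit at *
  have hdiv : i / 2 ^ b = (i - 2 ^ b) / 2 ^ b + 1 := by
    conv_lhs => rw [show i = (i - 2 ^ b) + 2 ^ b by omega]
    rw [Nat.add_div_right _ (two_pow_pos' b)]
  omega

lemma bwExp_comm (m i j : ℕ) : bwExp m i j = bwExp m j i := by
  unfold bwExp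
  rw [Finset.sum_congr rfl (fun l _ => by ring :
    ∀ l ∈ Finset.range m, (2 * (bwBit i l : ℤ) * (bwBit j l : ℤ) - (bwBit i l : ℤ) - (bwBit j l : ℤ) + 2)
      = (2 * (bwBit j l : ℤ) * (bwBit i l : ℤ) - (bwBit j l : ℤ) - (bwBit i l : ℤ) + 2))]
  ring

lemma bwExp_diag (m i : ℕ) (hmo : Odd m) : bwExp m i i = 2 * (bwPar m i : ℤ) + (m : ℤ) - 1 := by
  unfold bwExp
  have hsum : ∑ l ∈ Finset.range m,
      (2 * (bwBit i l : ℤ) * (bwBit i l : ℤ) - (bwBit i l : ℤ) - (bwBit i l : ℤ) + 2)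
      = 2 * m := by
    have hterm : ∀ l ∈ Finset.range m,
        (2 * (bwBit i l : ℤ) * (bwBit i l : ℤ) - (bwBit i l : ℤ) - (bwBit i l : ℤ) + 2) = 2 := by
      intro l _
      have := bwBit_le i l
      interval_cases h : bwBit i l <;> norm_num
    rw [Finset.sum_congr rfl hterm, Finset.sum_const, Finset.card_range, nsmul_eq_mul]
    ring
  rw [hsum]
  obtain ⟨t, ht⟩ := hmo
  have : (m + 1) / 2 = t + 1 := by omega
  rw [this]
  push_cast
  omega

lemma bwPar_add_pow (m i b : ℕ) (hb : b < m) (h : bwBit i b = 0) :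
    bwPar m (i + 2 ^ b) + bwPar m i = 1 := by
  have hset : (Finset.range m).filter (fun l => bwBit (i + 2 ^ b) l = 0)
      = ((Finset.range m).filter (fun l => bwBit i l = 0)).erase b := by
    ext l
    simp only [Finset.mem_filter, Finset.mem_erase, Finset.mem_range, bwBit_add_pow i b l h]
    rcases eq_or_ne l b with rfl | hne
    · simp
    · simp [hne]
    
  have hbmem : b ∈ (Finset.range m).filter (fun l => bwBit i l = 0) := by
    simp [Finset.mem_filter, Finset.mem_range, hb, h]
  have hcard : ((Finset.range m).filter (fun l => bwBit i l = 0)).card ≥ 1 :=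
    Finset.card_pos.mpr ⟨b, hbmem⟩
  unfold bwPar
  rw [hset, Finset.card_erase_of_mem hbmem]
  omega

lemma bwExp_flip (m i j b : ℕ) (hb : b < m) (h : bwBit i b = 0) :
    bwExp m (i + 2 ^ b) j = bwExp m i j + 2 * (bwBit j b : ℤ) - 2 * (bwPar m i : ℤ) := by
  unfold bwExp
  have hp := bwPar_add_pow m i b hb h
  have hpar : (bwPar m (i + 2 ^ b) : ℤ) = 1 - bwPar m i := by
    have := bwPar_le m i; push_cast; omega
  have hbmem : b ∈ Finset.range m := Finset.mem_range.mpr hb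
  have hsum : ∑ l ∈ Finset.range m,
      (2 * (bwBit (i + 2^b) l : ℤ) * (bwBit j l : ℤ) - (bwBit (i + 2^b) l : ℤ) - (bwBit j l : ℤ) + 2)
      = (∑ l ∈ Finset.range m,
      (2 * (bwBit i l : ℤ) * (bwBit j l : ℤ) - (bwBit i l : ℤ) - (bwBit j l : ℤ) + 2))
      + (2 * (bwBit j b : ℤ) - 1) := by
    rw [← Finset.sum_erase_add _ _ hbmem, ← Finset.sum_erase_add
      (f := fun l => (2 * (bwBit i l : ℤ) * (bwBit j l : ℤ) - (bwBit i l : ℤ) - (bwBit j l : ℤ) + 2)) _ hbmem]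
    have h1 : ∀ l ∈ (Finset.range m).erase b,
        (2 * (bwBit (i + 2^b) l : ℤ) * (bwBit j l : ℤ) - (bwBit (i + 2^b) l : ℤ) - (bwBit j l : ℤ) + 2)
        = (2 * (bwBit i l : ℤ) * (bwBit j l : ℤ) - (bwBit i l : ℤ) - (bwBit j l : ℤ) + 2) := by
      intro l hl
      rw [bwBit_add_pow i b l h, if_neg (Finset.mem_erase.mp hl).1]
    rw [Finset.sum_congr rfl h1, bwBit_add_pow i b b h, if_pos rfl, h]
    push_cast
    ring
  rw [hsum, hpar]
  ring

lemma bwExp_struct (m i j : ℕ) (hmo : Odd m) :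
    bwExp m i j = (bwPar m i : ℤ) + (bwPar m j : ℤ) + (m : ℤ) - 1
      - ((Finset.range m).filter fun l => bwBit i l ≠ bwBit j l).card ∧
    2 ∣ (bwPar m i + bwPar m j + ((Finset.range m).filter fun l => bwBit i l ≠ bwBit j l).card) := by
  set D := ((Finset.range m).filter fun l => bwBit i l ≠ bwBit j l).card with hD
  constructor
  · unfold bwExp
    have hsum : ∑ l ∈ Finset.range m,
        (2 * (bwBit i l : ℤ) * (bwBit j l : ℤ) - (bwBit i l : ℤ) - (bwBit j l : ℤ) + 2)
        = 2 * m - D := by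
      have hcD : (D : ℤ) = ∑ l ∈ Finset.range m, (if bwBit i l ≠ bwBit j l then (1:ℤ) else 0) := by
        rw [hD, Finset.card_filter]; push_cast; rfl
      have hterm : ∀ l ∈ Finset.range m,
          (2 * (bwBit i l : ℤ) * (bwBit j l : ℤ) - (bwBit i l : ℤ) - (bwBit j l : ℤ) + 2)
          = 2 - (if bwBit i l ≠ bwBit j l then (1:ℤ) else 0) := by
        intro l _
        have h1 := bwBit_le i l
        have h2 := bwBit_le j l
        interval_cases hbi : bwBit i l <;> interval_cases hbj : bwBit j l <;> norm_num
      rw [Finset.sum_congr rfl hterm, Finset.sum_sub_distrib, Finset.sum_const,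
        Finset.card_range, nsmul_eq_mul, hcD]
      ring
    rw [hsum]
    obtain ⟨t, ht⟩ := hmo
    have : (m + 1) / 2 = t + 1 := by omega
    rw [this]
    push_cast
    omega
  · -- parity
    set zi := ((Finset.range m).filter fun l => bwBit i l = 0).card with hzi
    set zj := ((Finset.range m).filter fun l => bwBit j l = 0).card with hzj
    have hz : 2 ∣ (zi + zj + D) := by
      have : zi + zj + D = ∑ l ∈ Finset.range m,
          ((if bwBit i l = 0 then 1 else 0) + (if bwBit j l = 0 then 1 else 0)
            + (if bwBit i l ≠ bwBit j l then 1 else 0)) := by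
        rw [Finset.sum_add_distrib, Finset.sum_add_distrib, hzi, hzj, hD,
          Finset.card_filter, Finset.card_filter, Finset.card_filter]
      rw [this]
      apply Finset.dvd_sum
      intro l _
      have h1 := bwBit_le i l
      have h2 := bwBit_le j l
      interval_cases hbi : bwBit i l <;> interval_cases hbj : bwBit j l <;> norm_num
    have hpi : bwPar m i = zi % 2 := rfl
    have hpj : bwPar m j = zj % 2 := rfl
    omega

lemma bwExp_two (m i j : ℕ) (hmo : Odd m) : ∃ k : ℕ, bwExp m i j = 2 * k := by
  obtain ⟨h1, h2⟩ := bwExp_struct m i j hmo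
  have hD : ((Finset.range m).filter fun l => bwBit i l ≠ bwBit j l).card ≤ m := by
    calc _ ≤ (Finset.range m).card := Finset.card_filter_le _ _
    _ = m := Finset.card_range m
  have hpi := bwPar_le m i
  have hpj := bwPar_le m j
  obtain ⟨t, ht⟩ := hmo
  refine ⟨(bwExp m i j / 2).toNat, by omega⟩

lemma bwBit_high (i b l : ℕ) (hbl : b ≤ l) : bwBit i l = bwBit (i / 2 ^ b) (l - b) := by
  unfold bwBit
  rw [Nat.div_div_eq_div_mul, ← pow_add, Nat.add_sub_cancel' hbl]

lemma bwExp_two_pos (m i j b : ℕ) (hmo : Odd m) (hb2 : b + 2 ≤ m)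
    (hhigh : i / 2 ^ b = j / 2 ^ b) : ∃ k : ℕ, bwExp m i j = 2 * k ∧ 1 ≤ k := by
  obtain ⟨h1, h2⟩ := bwExp_struct m i j hmo
  have hsub : ((Finset.range m).filter fun l => bwBit i l ≠ bwBit j l) ⊆ Finset.range b := by
    intro l hl
    simp only [Finset.mem_filter, Finset.mem_range] at hl ⊢
    by_contra hc
    push_neg at hc
    exact hl.2 (by rw [bwBit_high i b l hc, bwBit_high j b l hc, hhigh])
  have hD : ((Finset.range m).filter fun l => bwBit i l ≠ bwBit j l).card ≤ b := by
    calc _ ≤ (Finset.range b).card := Finset.card_le_card hsub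
    _ = b := Finset.card_range b
  have hpi := bwPar_le m i
  have hpj := bwPar_le m j
  obtain ⟨t, ht⟩ := hmo
  refine ⟨(bwExp m i j / 2).toNat, by omega, by omega⟩

lemma bwClose (i j b : ℕ) (h1 : j < i) (h2 : i < j + 2 ^ b) (h3 : bwBit i b = bwBit j b) :
    i / 2 ^ b = j / 2 ^ b := by
  have hq1 : j / 2 ^ b ≤ i / 2 ^ b := Nat.div_le_div_right h1.le
  have hq2 : i / 2 ^ b ≤ j / 2 ^ b + 1 := by
    calc i / 2 ^ b ≤ (j + 2 ^ b) / 2 ^ b := Nat.div_le_div_right h2.le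
    _ = j / 2 ^ b + 1 := Nat.add_div_right _ (two_pow_pos' b)
  unfold bwBit at h3
  omega

section rows
variable (m b : ℕ)

def bwUp (i : Fin (2 ^ m)) : Fin (2 ^ m) :=
  ⟨((i : ℕ) + 2 ^ b) % 2 ^ m, Nat.mod_lt _ (two_pow_pos' m)⟩

def bwDown (i : Fin (2 ^ m)) : Fin (2 ^ m) :=
  ⟨(i : ℕ) - 2 ^ b, lt_of_le_of_lt (Nat.sub_le _ _) i.isLt⟩

lemma bwUp_val (hb : b < m) (i : Fin (2 ^ m)) (h : bwBit (i : ℕ) b = 0) :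
    (bwUp m b i : ℕ) = (i : ℕ) + 2 ^ b := by
  simp only [bwUp]
  exact Nat.mod_eq_of_lt (bwAdd_lt m i b i.isLt hb h)

lemma bwDown_val (i : Fin (2 ^ m)) : (bwDown m b i : ℕ) = (i : ℕ) - 2 ^ b := rfl

-- row sum lemma for r = 1
lemma bwSigma_row1 (a : ℕ) (hb : m - a < m) (i : Fin (2 ^ m)) (f : Fin (2 ^ m) → ℝ) :
    ∑ k, (((bwSigma m a 1) i k : ℤ) : ℝ) * f k =
      if bwBit (i : ℕ) (m - a) = 0 then
        -(f i) + 2 ^ bwPar m (i : ℕ) * f (bwUp m (m - a) i) else f i := by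
  rcases Nat.eq_zero_or_pos (bwBit (i : ℕ) (m - a)) with h | h
  · rw [if_pos h]
    have hcond : ∀ k : Fin (2 ^ m), ((k : ℕ) = (i : ℕ) + 2 ^ (m - a)) ↔ k = bwUp m (m - a) i := by
      intro k
      rw [← bwUp_val m (m - a) hb i h, Fin.val_eq_val]
    have : ∀ k : Fin (2 ^ m), (((bwSigma m a 1) i k : ℤ) : ℝ) * f k =
        (if k = i then -(f k) else 0) + (if k = bwUp m (m - a) i then 2 ^ bwPar m (i : ℕ) * f k else 0) := by
      intro k
      simp only [bwSigma, Matrix.of_apply, if_pos rfl]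
      rw [if_pos h]
      simp only [hcond k]
      split_ifs with h1 h2 h2 <;> push_cast <;> ring
    rw [Finset.sum_congr rfl (fun k _ => this k), Finset.sum_add_distrib,
      Finset.sum_ite_eq' Finset.univ i, Finset.sum_ite_eq' Finset.univ (bwUp m (m-a) i)]
    simp
  · have h1 : bwBit (i : ℕ) (m - a) = 1 := by have := bwBit_le (i : ℕ) (m - a); omega
    rw [if_neg (by omega)]
    have : ∀ k : Fin (2 ^ m), (((bwSigma m a 1) i k : ℤ) : ℝ) * f k =
        (if k = i then f k else 0) := by
      intro k
      simp only [bwSigma, Matrix.of_apply, if_pos rfl]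
      rw [if_neg (by omega : ¬ bwBit (i : ℕ) (m - a) = 0)]
      split_ifs with h2 <;> norm_num
    rw [Finset.sum_congr rfl (fun k _ => this k), Finset.sum_ite_eq' Finset.univ i]
    simp

-- row sum lemma for r = 2
lemma bwSigma_row2 (a : ℕ) (hb : m - a < m) (i : Fin (2 ^ m)) (f : Fin (2 ^ m) → ℝ) :
    ∑ k, (((bwSigma m a 2) i k : ℤ) : ℝ) * f k =
      if bwBit (i : ℕ) (m - a) = 1 then
        -(f i) + 2 ^ bwPar m (i : ℕ) * f (bwDown m (m - a) i) else f i := by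
  rcases Nat.eq_zero_or_pos (bwBit (i : ℕ) (m - a)) with h | h
  · have h0 : bwBit (i : ℕ) (m - a) ≠ 1 := by omega
    rw [if_neg h0]
    have : ∀ k : Fin (2 ^ m), (((bwSigma m a 2) i k : ℤ) : ℝ) * f k =
        (if k = i then f k else 0) := by
      intro k
      simp only [bwSigma, Matrix.of_apply]
      rw [if_neg (by norm_num : ¬ (2:ℕ) = 1), if_neg (by omega : ¬ bwBit (i : ℕ) (m - a) = 1)]
      split_ifs with h2 <;> norm_num
    rw [Finset.sum_congr rfl (fun k _ => this k), Finset.sum_ite_eq' Finset.univ i]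
    simp
  · have h1 : bwBit (i : ℕ) (m - a) = 1 := by have := bwBit_le (i : ℕ) (m - a); omega
    rw [if_pos h1]
    have hle := bwBit_one_le (i : ℕ) (m - a) h1
    have hcond : ∀ k : Fin (2 ^ m), ((k : ℕ) + 2 ^ (m - a) = (i : ℕ)) ↔ k = bwDown m (m - a) i := by
      intro k
      rw [← Fin.val_eq_val, bwDown_val]
      omega
    have : ∀ k : Fin (2 ^ m), (((bwSigma m a 2) i k : ℤ) : ℝ) * f k =
        (if k = i then -(f k) else 0) + (if k = bwDown m (m - a) i then 2 ^ bwPar m (i : ℕ) * f k else 0) := by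
      intro k
      simp only [bwSigma, Matrix.of_apply]
      rw [if_neg (by norm_num : ¬ (2:ℕ) = 1), if_pos h1]
      simp only [hcond k]
      split_ifs with h2 h3 h3 <;> push_cast <;> ring
    rw [Finset.sum_congr rfl (fun k _ => this k), Finset.sum_add_distrib,
      Finset.sum_ite_eq' Finset.univ i, Finset.sum_ite_eq' Finset.univ (bwDown m (m-a) i)]
    simp
end rows

-- ## √2 power kit
lemma s2_ne : Real.sqrt 2 ≠ 0 := by positivity
lemma s2_sq : Real.sqrt 2 ^ (2:ℤ) = 2 := by
  rw [zpow_two, Real.mul_self_sqrt (by norm_num : (0:ℝ) ≤ 2)]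
lemma kitC (e : ℤ) : Real.sqrt 2 ^ (e + 2) = 2 * Real.sqrt 2 ^ e := by
  rw [zpow_add₀ s2_ne, s2_sq]; ring
lemma kitA (p : ℕ) (e : ℤ) :
    (2:ℝ) ^ p * Real.sqrt 2 ^ e = Real.sqrt 2 ^ (e + 2 * p) := by
  have h1 : (2:ℝ) ^ p = Real.sqrt 2 ^ ((2 * p : ℕ) : ℤ) := by
    rw [zpow_natCast, pow_mul, Real.sq_sqrt (by norm_num : (0:ℝ) ≤ 2)]
  rw [h1, ← zpow_add₀ s2_ne]
  congr 1; push_cast; ring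
lemma kitB (k : ℕ) : Real.sqrt 2 ^ (2 * (k:ℤ)) = ((2 ^ k : ℤ) : ℝ) := by
  rw [show (2 * (k:ℤ)) = ((2 * k : ℕ) : ℤ) by push_cast; ring,
    zpow_natCast, pow_mul, Real.sq_sqrt (by norm_num : (0:ℝ) ≤ 2)]
  push_cast; ring

-- ## bwH evaluation
lemma bwH_eval_lt (m : ℕ) (x y : Fin (2^m)) (h : (y:ℕ) < (x:ℕ)) :
    bwH m x y = Real.sqrt 2 ^ bwExp m (x:ℕ) (y:ℕ) := by
  simp only [bwH, Matrix.of_apply]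
  rw [if_pos (show y < x from h)]
lemma bwH_eval_diag (m : ℕ) (x : Fin (2^m)) :
    bwH m x x = Real.sqrt 2 ^ (bwExp m (x:ℕ) (x:ℕ) - 2) := by
  simp only [bwH, Matrix.of_apply]
  rw [if_neg (lt_irrefl x)]; simp
lemma bwH_eval_gt (m : ℕ) (x y : Fin (2^m)) (h : (x:ℕ) < (y:ℕ)) :
    bwH m x y = 0 := by
  simp only [bwH, Matrix.of_apply]
  rw [if_neg (show ¬ y < x by exact not_lt.mpr h.le), if_neg (by
    intro he; rw [he] at h; exact lt_irrefl _ h)]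

-- ## the G function for r = 1
noncomputable def bwG1 (m a : ℕ) (x k : Fin (2^m)) : ℝ :=
  if bwBit (x:ℕ) (m-a) = 0 then
    -(bwH m x k) + 2 ^ bwPar m (x:ℕ) * bwH m (bwUp m (m-a) x) k
  else bwH m x k

lemma bwBMat_eval1 (m a : ℕ) (hbm : m - a < m) (i j : Fin (2^m)) :
    bwBMat m (bwSigma m a 1) i j = bwH m i j -
      (if bwBit (j:ℕ) (m-a) = 0 then
        -(bwG1 m a i j) + 2 ^ bwPar m (j:ℕ) * bwG1 m a i (bwUp m (m-a) j)
      else bwG1 m a i j) := by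
  have hSH : ∀ x k : Fin (2^m),
      ((bwSigma m a 1).map (Int.cast : ℤ → ℝ) * bwH m) x k = bwG1 m a x k := by
    intro x k
    rw [Matrix.mul_apply]
    have h1 : ∀ l, (bwSigma m a 1).map (Int.cast : ℤ → ℝ) x l * bwH m l k
        = ((bwSigma m a 1 x l : ℤ) : ℝ) * bwH m l k := fun l => by rw [Matrix.map_apply]
    rw [Finset.sum_congr rfl fun l _ => h1 l]
    exact bwSigma_row1 m a hbm x (fun l => bwH m l k)
  unfold bwBMat
  rw [Matrix.sub_apply]
  congr 1
  rw [Matrix.mul_apply]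
  have h1 : ∀ k, (((bwSigma m a 1).map (Int.cast : ℤ → ℝ) * bwH m) i k)
      * ((bwSigma m a 1).map (Int.cast : ℤ → ℝ))ᵀ k j
      = ((bwSigma m a 1 j k : ℤ) : ℝ) * bwG1 m a i k := by
    intro k
    rw [Matrix.transpose_apply, Matrix.map_apply, hSH, mul_comm]
  rw [Finset.sum_congr rfl fun k _ => h1 k]
  exact bwSigma_row1 m a hbm j (fun k => bwG1 m a i k)

lemma bwKey1 (m a : ℕ) (hm : 5 ≤ m) (hmo : Odd m) (ha : 2 ≤ a) (ha' : a ≤ m)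
    (i j : Fin (2^m)) (hij : j < i) :
    ∃ z : ℤ, bwBMat m (bwSigma m a 1) i j = 2 * z := by
  have hbm : m - a < m := by omega
  have hb2 : m - a + 2 ≤ m := by omega
  obtain ⟨t, ht⟩ := hmo
  have hmo : Odd m := ⟨t, ht⟩
  have ht2 : 2 ≤ t := by omega
  have hIJ : (j:ℕ) < (i:ℕ) := hij
  have hp1 : 0 < 2^(m-a) := two_pow_pos' (m-a)
  have hp2 : 0 < 2^m := two_pow_pos' m
  have hble := bwBit_le (i:ℕ) (m-a)
  have hble' := bwBit_le (j:ℕ) (m-a)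
  have hE := rfl.le.trans_eq (rfl : bwExp m (i:ℕ) (j:ℕ) = bwExp m (i:ℕ) (j:ℕ))
  have vA : bwH m i j = Real.sqrt 2 ^ bwExp m (i:ℕ) (j:ℕ) := bwH_eval_lt m i j hIJ
  rw [bwBMat_eval1 m a hbm i j]
  rcases Nat.eq_zero_or_pos (bwBit (i:ℕ) (m-a)) with hi0 | hi1'
  case inr =>
    have hi1 : bwBit (i:ℕ) (m-a) = 1 := by omega
    have hGij : bwG1 m a i j = bwH m i j := by unfold bwG1; rw [if_neg (by omega)]
    rcases Nat.eq_zero_or_pos (bwBit (j:ℕ) (m-a)) with hj0 | hj1'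
    case inr => -- bits (1,1): zero
      rw [if_neg (by omega), hGij]
      exact ⟨0, by push_cast; ring⟩
    case inl => -- bits (1,0): i inactive, j active
      rw [if_pos hj0, hGij]
      have hupj : (bwUp m (m-a) j : ℕ) = (j:ℕ) + 2^(m-a) := bwUp_val m (m-a) hbm j hj0
      have hGiup : bwG1 m a i (bwUp m (m-a) j) = bwH m i (bwUp m (m-a) j) := by
        unfold bwG1; rw [if_neg (by omega)]
      rw [hGiup]
      rcases lt_trichotomy ((j:ℕ) + 2^(m-a)) (i:ℕ) with hc | hc | hc
      · -- i > up j : zero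
        have hlt : ((bwUp m (m-a) j : ℕ)) < (i:ℕ) := by rw [hupj]; exact hc
        have vC : (2:ℝ) ^ bwPar m (j:ℕ) * bwH m i (bwUp m (m-a) j)
            = 2 * Real.sqrt 2 ^ bwExp m (i:ℕ) (j:ℕ) := by
          rw [bwH_eval_lt m i (bwUp m (m-a) j) hlt, hupj,
            bwExp_comm m (i:ℕ) ((j:ℕ) + 2^(m-a)),
            bwExp_flip m (j:ℕ) (i:ℕ) (m-a) hbm hj0,
            bwExp_comm m (j:ℕ) (i:ℕ), hi1, kitA,
            show bwExp m (i:ℕ) (j:ℕ) + 2 * ((1:ℕ):ℤ) - 2 * (bwPar m (j:ℕ):ℤ)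
              + 2 * (bwPar m (j:ℕ):ℤ) = bwExp m (i:ℕ) (j:ℕ) + 2 by push_cast; ring, kitC]
        exact ⟨0, by push_cast; linear_combination 2 * vA - vC⟩
      · -- i = up j : √2^(m-1)
        have hiv : (i:ℕ) = ((bwUp m (m-a) j : ℕ)) := by rw [hupj]; omega
        have hieq : bwUp m (m-a) j = i := by
          apply Fin.ext; omega
        rw [hieq]
        have hps : bwPar m (i:ℕ) + bwPar m (j:ℕ) = 1 := by
          rw [show (i:ℕ) = (j:ℕ) + 2^(m-a) by omega]
          exact bwPar_add_pow m (j:ℕ) (m-a) hbm hj0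
        have hEv : bwExp m (i:ℕ) (j:ℕ) = 2 * (t:ℤ) := by
          rw [show (i:ℕ) = (j:ℕ) + 2^(m-a) by omega,
            bwExp_flip m (j:ℕ) (j:ℕ) (m-a) hbm hj0, hj0,
            bwExp_diag m (j:ℕ) hmo]
          push_cast
          omega
        have vC : (2:ℝ) ^ bwPar m (j:ℕ) * bwH m i i
            = Real.sqrt 2 ^ (2 * (t:ℤ)) := by
          rw [bwH_eval_diag m i, bwExp_diag m (i:ℕ) hmo, kitA]
          congr 1
          have : (bwPar m (i:ℕ) : ℤ) + (bwPar m (j:ℕ) : ℤ) = 1 := by exact_mod_cast hps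
          omega
        refine ⟨2 ^ (t-1), ?_⟩
        rw [vA, hEv, vC, kitB]
        have h2t : ((2:ℤ)^t : ℤ) = 2 * 2^(t-1) := by
          rw [← pow_succ']; congr 1; omega
        push_cast [h2t]
        ring
      · -- i < up j : H entry is 0, M = 2√2^E
        have hgt : (i:ℕ) < ((bwUp m (m-a) j : ℕ)) := by rw [hupj]; exact hc
        have vC0 : bwH m i (bwUp m (m-a) j) = 0 := bwH_eval_gt m i (bwUp m (m-a) j) hgt
        obtain ⟨k, hk⟩ := bwExp_two m (i:ℕ) (j:ℕ) hmo
        refine ⟨2 ^ k, ?_⟩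
        rw [vA, hk, kitB, vC0]
        push_cast
        ring
  case inl =>
    have hupi : (bwUp m (m-a) i : ℕ) = (i:ℕ) + 2^(m-a) := bwUp_val m (m-a) hbm i hi0
    have hGij : bwG1 m a i j =
        -(bwH m i j) + 2 ^ bwPar m (i:ℕ) * bwH m (bwUp m (m-a) i) j := by
      unfold bwG1; rw [if_pos hi0]
    have hltBj : (j:ℕ) < ((bwUp m (m-a) i : ℕ)) := by rw [hupi]; omega
    rcases Nat.eq_zero_or_pos (bwBit (j:ℕ) (m-a)) with hj0 | hj1'
    case inr => -- bits (0,1): i active, j inactive : zero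
      have hj1 : bwBit (j:ℕ) (m-a) = 1 := by omega
      rw [if_neg (by omega), hGij]
      have vB : (2:ℝ) ^ bwPar m (i:ℕ) * bwH m (bwUp m (m-a) i) j
          = 2 * Real.sqrt 2 ^ bwExp m (i:ℕ) (j:ℕ) := by
        rw [bwH_eval_lt m (bwUp m (m-a) i) j hltBj, hupi,
          bwExp_flip m (i:ℕ) (j:ℕ) (m-a) hbm hi0, hj1, kitA,
          show bwExp m (i:ℕ) (j:ℕ) + 2 * ((1:ℕ):ℤ) - 2 * (bwPar m (i:ℕ):ℤ)
            + 2 * (bwPar m (i:ℕ):ℤ) = bwExp m (i:ℕ) (j:ℕ) + 2 by push_cast; ring, kitC]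
      exact ⟨0, by push_cast; linear_combination 2 * vA - vB⟩
    case inl => -- bits (0,0): both active
      rw [if_pos hj0, hGij]
      have hupj : (bwUp m (m-a) j : ℕ) = (j:ℕ) + 2^(m-a) := bwUp_val m (m-a) hbm j hj0
      have hb1 : bwBit ((j:ℕ) + 2^(m-a)) (m-a) = 1 := by
        rw [bwBit_add_pow (j:ℕ) (m-a) (m-a) hj0, if_pos rfl]
      have hGiup : bwG1 m a i (bwUp m (m-a) j) =
          -(bwH m i (bwUp m (m-a) j)) +
            2 ^ bwPar m (i:ℕ) * bwH m (bwUp m (m-a) i) (bwUp m (m-a) j) := by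
        unfold bwG1; rw [if_pos hi0]
      rw [hGiup]
      have vB : (2:ℝ) ^ bwPar m (i:ℕ) * bwH m (bwUp m (m-a) i) j
          = Real.sqrt 2 ^ bwExp m (i:ℕ) (j:ℕ) := by
        rw [bwH_eval_lt m (bwUp m (m-a) i) j hltBj, hupi,
          bwExp_flip m (i:ℕ) (j:ℕ) (m-a) hbm hi0, hj0, kitA]
        congr 1; push_cast; ring
      have hltD : ((bwUp m (m-a) j : ℕ)) < ((bwUp m (m-a) i : ℕ)) := by
        rw [hupi, hupj]; omega
      have vD : (2:ℝ) ^ bwPar m (j:ℕ) *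
          ((2:ℝ) ^ bwPar m (i:ℕ) * bwH m (bwUp m (m-a) i) (bwUp m (m-a) j))
          = 2 * Real.sqrt 2 ^ bwExp m (i:ℕ) (j:ℕ) := by
        rw [bwH_eval_lt m (bwUp m (m-a) i) (bwUp m (m-a) j) hltD, hupi, hupj,
          bwExp_flip m (i:ℕ) ((j:ℕ) + 2^(m-a)) (m-a) hbm hi0, hb1,
          bwExp_comm m (i:ℕ) ((j:ℕ) + 2^(m-a)),
          bwExp_flip m (j:ℕ) (i:ℕ) (m-a) hbm hj0, hi0,
          bwExp_comm m (j:ℕ) (i:ℕ), kitA,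
          show bwExp m (i:ℕ) (j:ℕ) + 2 * ((0:ℕ):ℤ) - 2 * (bwPar m (j:ℕ):ℤ)
            + 2 * ((1:ℕ):ℤ) - 2 * (bwPar m (i:ℕ):ℤ) + 2 * (bwPar m (i:ℕ):ℤ)
            = bwExp m (i:ℕ) (j:ℕ) - 2 * (bwPar m (j:ℕ):ℤ) + 2 by push_cast; ring, kitA,
          show bwExp m (i:ℕ) (j:ℕ) - 2 * (bwPar m (j:ℕ):ℤ) + 2 + 2 * (bwPar m (j:ℕ):ℤ)
            = bwExp m (i:ℕ) (j:ℕ) + 2 by ring, kitC]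
      rcases lt_trichotomy ((j:ℕ) + 2^(m-a)) (i:ℕ) with hc | hc | hc
      · -- i > up j : zero
        have hlt : ((bwUp m (m-a) j : ℕ)) < (i:ℕ) := by rw [hupj]; exact hc
        have vC : (2:ℝ) ^ bwPar m (j:ℕ) * bwH m i (bwUp m (m-a) j)
            = Real.sqrt 2 ^ bwExp m (i:ℕ) (j:ℕ) := by
          rw [bwH_eval_lt m i (bwUp m (m-a) j) hlt, hupj,
            bwExp_comm m (i:ℕ) ((j:ℕ) + 2^(m-a)),
            bwExp_flip m (j:ℕ) (i:ℕ) (m-a) hbm hj0, hi0,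
            bwExp_comm m (j:ℕ) (i:ℕ), kitA,
            show bwExp m (i:ℕ) (j:ℕ) + 2 * ((0:ℕ):ℤ) - 2 * (bwPar m (j:ℕ):ℤ)
              + 2 * (bwPar m (j:ℕ):ℤ) = bwExp m (i:ℕ) (j:ℕ) by push_cast; ring]
        exact ⟨0, by push_cast; linear_combination vB + vC - vD⟩
      · -- i = up j : impossible, bit mismatch
        exfalso
        have : bwBit (i:ℕ) (m-a) = 1 := by rw [show (i:ℕ) = (j:ℕ) + 2^(m-a) from hc.symm]; exact hb1
        omega
      · -- i < up j : -√2^E with E = 2k, k ≥ 1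
        have hgt : (i:ℕ) < ((bwUp m (m-a) j : ℕ)) := by rw [hupj]; exact hc
        have vC0 : bwH m i (bwUp m (m-a) j) = 0 := bwH_eval_gt m i (bwUp m (m-a) j) hgt
        obtain ⟨k, hk, hk1⟩ := bwExp_two_pos m (i:ℕ) (j:ℕ) (m-a) hmo hb2
          (bwClose (i:ℕ) (j:ℕ) (m-a) hIJ hc (by omega))
        obtain ⟨k', rfl⟩ : ∃ k', k = k' + 1 := ⟨k - 1, by omega⟩
        refine ⟨-2 ^ k', ?_⟩
        have vAk : bwH m i j = (2:ℝ) ^ (k'+1) := by rw [vA, hk, kitB]; push_cast; ring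
        have vBk : (2:ℝ) ^ bwPar m (i:ℕ) * bwH m (bwUp m (m-a) i) j = (2:ℝ) ^ (k'+1) := by
          rw [vB, hk, kitB]; push_cast; ring
        have vDk : (2:ℝ) ^ bwPar m (j:ℕ) *
            ((2:ℝ) ^ bwPar m (i:ℕ) * bwH m (bwUp m (m-a) i) (bwUp m (m-a) j))
            = 2 * (2:ℝ) ^ (k'+1) := by rw [vD, hk, kitB]; push_cast; ring
        push_cast
        linear_combination vBk + (2:ℝ) ^ bwPar m (j:ℕ) * vC0 - vDk

-- ## the G function for r = 2
noncomputable def bwG2 (m a : ℕ) (x k : Fin (2^m)) : ℝ :=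
  if bwBit (x:ℕ) (m-a) = 1 then
    -(bwH m x k) + 2 ^ bwPar m (x:ℕ) * bwH m (bwDown m (m-a) x) k
  else bwH m x k

lemma bwBMat_eval2 (m a : ℕ) (hbm : m - a < m) (i j : Fin (2^m)) :
    bwBMat m (bwSigma m a 2) i j = bwH m i j -
      (if bwBit (j:ℕ) (m-a) = 1 then
        -(bwG2 m a i j) + 2 ^ bwPar m (j:ℕ) * bwG2 m a i (bwDown m (m-a) j)
      else bwG2 m a i j) := by
  have hSH : ∀ x k : Fin (2^m),
      ((bwSigma m a 2).map (Int.cast : ℤ → ℝ) * bwH m) x k = bwG2 m a x k := by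
    intro x k
    rw [Matrix.mul_apply]
    have h1 : ∀ l, (bwSigma m a 2).map (Int.cast : ℤ → ℝ) x l * bwH m l k
        = ((bwSigma m a 2 x l : ℤ) : ℝ) * bwH m l k := fun l => by rw [Matrix.map_apply]
    rw [Finset.sum_congr rfl fun l _ => h1 l]
    exact bwSigma_row2 m a hbm x (fun l => bwH m l k)
  unfold bwBMat
  rw [Matrix.sub_apply]
  congr 1
  rw [Matrix.mul_apply]
  have h1 : ∀ k, (((bwSigma m a 2).map (Int.cast : ℤ → ℝ) * bwH m) i k)
      * ((bwSigma m a 2).map (Int.cast : ℤ → ℝ))ᵀ k j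
      = ((bwSigma m a 2 j k : ℤ) : ℝ) * bwG2 m a i k := by
    intro k
    rw [Matrix.transpose_apply, Matrix.map_apply, hSH, mul_comm]
  rw [Finset.sum_congr rfl fun k _ => h1 k]
  exact bwSigma_row2 m a hbm j (fun k => bwG2 m a i k)

lemma bwKey2 (m a : ℕ) (hm : 5 ≤ m) (hmo : Odd m) (ha : 2 ≤ a) (ha' : a ≤ m)
    (i j : Fin (2^m)) (hij : j < i) :
    ∃ z : ℤ, bwBMat m (bwSigma m a 2) i j = 2 * z := by
  have hbm : m - a < m := by omega
  have hb2 : m - a + 2 ≤ m := by omega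
  obtain ⟨t, ht⟩ := hmo
  have hmo : Odd m := ⟨t, ht⟩
  have ht2 : 2 ≤ t := by omega
  have hIJ : (j:ℕ) < (i:ℕ) := hij
  have hp1 : 0 < 2^(m-a) := two_pow_pos' (m-a)
  have hp2 : 0 < 2^m := two_pow_pos' m
  have hble := bwBit_le (i:ℕ) (m-a)
  have hble' := bwBit_le (j:ℕ) (m-a)
  have hpvi := bwPar_le m (i:ℕ)
  have hpvj := bwPar_le m (j:ℕ)
  have vA : bwH m i j = Real.sqrt 2 ^ bwExp m (i:ℕ) (j:ℕ) := bwH_eval_lt m i j hIJ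
  rw [bwBMat_eval2 m a hbm i j]
  rcases Nat.eq_zero_or_pos (bwBit (i:ℕ) (m-a)) with hi0 | hi1'
  case inl => -- i inactive for r=2
    have hGij : bwG2 m a i j = bwH m i j := by unfold bwG2; rw [if_neg (by omega)]
    rcases Nat.eq_zero_or_pos (bwBit (j:ℕ) (m-a)) with hj0 | hj1'
    case inl => -- bits (0,0): zero
      rw [if_neg (by omega), hGij]
      exact ⟨0, by push_cast; ring⟩
    case inr => -- bits (0,1): j active, i inactive : zero
      have hj1 : bwBit (j:ℕ) (m-a) = 1 := by omega
      rw [if_pos hj1, hGij]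
      have hGiD : bwG2 m a i (bwDown m (m-a) j) = bwH m i (bwDown m (m-a) j) := by
        unfold bwG2; rw [if_neg (by omega)]
      rw [hGiD]
      have hdj : (j:ℕ) - 2^(m-a) + 2^(m-a) = (j:ℕ) := by
        have := bwBit_one_le (j:ℕ) (m-a) hj1; omega
      have hbdj : bwBit ((j:ℕ) - 2^(m-a)) (m-a) = 0 := bwBit_sub_pow (j:ℕ) (m-a) hj1
      have hpd : bwPar m (j:ℕ) + bwPar m ((j:ℕ) - 2^(m-a)) = 1 := by
        have := bwPar_add_pow m ((j:ℕ) - 2^(m-a)) (m-a) hbm hbdj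
        rw [hdj] at this; exact this
      have hEdj : bwExp m (i:ℕ) ((j:ℕ) - 2^(m-a))
          = bwExp m (i:ℕ) (j:ℕ) + 2 - 2 * (bwPar m (j:ℕ):ℤ) := by
        have h1 := bwExp_flip m ((j:ℕ) - 2^(m-a)) (i:ℕ) (m-a) hbm hbdj
        rw [hdj, hi0] at h1
        have hc1 := bwExp_comm m (j:ℕ) (i:ℕ)
        have hc2 := bwExp_comm m ((j:ℕ) - 2^(m-a)) (i:ℕ)
        have hpd' : (bwPar m (j:ℕ) : ℤ) + (bwPar m ((j:ℕ) - 2^(m-a)) : ℤ) = 1 := by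
          exact_mod_cast hpd
        push_cast at h1
        omega
      have hlt : ((bwDown m (m-a) j : ℕ)) < (i:ℕ) := by
        rw [bwDown_val]; omega
      have vC : (2:ℝ) ^ bwPar m (j:ℕ) * bwH m i (bwDown m (m-a) j)
          = 2 * Real.sqrt 2 ^ bwExp m (i:ℕ) (j:ℕ) := by
        rw [bwH_eval_lt m i (bwDown m (m-a) j) hlt, bwDown_val, hEdj, kitA,
          show bwExp m (i:ℕ) (j:ℕ) + 2 - 2 * (bwPar m (j:ℕ):ℤ) + 2 * (bwPar m (j:ℕ):ℤ)
            = bwExp m (i:ℕ) (j:ℕ) + 2 by ring, kitC]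
      exact ⟨0, by push_cast; linear_combination 2 * vA - vC⟩
  case inr =>
    have hi1 : bwBit (i:ℕ) (m-a) = 1 := by omega
    have hdi : (i:ℕ) - 2^(m-a) + 2^(m-a) = (i:ℕ) := by
      have := bwBit_one_le (i:ℕ) (m-a) hi1; omega
    have hbdi : bwBit ((i:ℕ) - 2^(m-a)) (m-a) = 0 := bwBit_sub_pow (i:ℕ) (m-a) hi1
    have hpdI : bwPar m (i:ℕ) + bwPar m ((i:ℕ) - 2^(m-a)) = 1 := by
      have := bwPar_add_pow m ((i:ℕ) - 2^(m-a)) (m-a) hbm hbdi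
      rw [hdi] at this; exact this
    have hpdI' : (bwPar m (i:ℕ) : ℤ) + (bwPar m ((i:ℕ) - 2^(m-a)) : ℤ) = 1 := by
      exact_mod_cast hpdI
    have hGij : bwG2 m a i j =
        -(bwH m i j) + 2 ^ bwPar m (i:ℕ) * bwH m (bwDown m (m-a) i) j := by
      unfold bwG2; rw [if_pos hi1]
    rcases Nat.eq_zero_or_pos (bwBit (j:ℕ) (m-a)) with hj0 | hj1'
    case inl => -- bits (1,0): i active, j inactive
      rw [if_neg (by omega), hGij]
      rcases lt_trichotomy ((i:ℕ) - 2^(m-a)) (j:ℕ) with hc | hc | hc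
      · -- down i < j : B entry 0, M = 2√2^E
        have hgt : ((bwDown m (m-a) i : ℕ)) < (j:ℕ) := by rw [bwDown_val]; omega
        have vB0 : bwH m (bwDown m (m-a) i) j = 0 := by
          apply bwH_eval_gt m (bwDown m (m-a) i) j hgt
        obtain ⟨k, hk⟩ := bwExp_two m (i:ℕ) (j:ℕ) hmo
        refine ⟨2 ^ k, ?_⟩
        rw [vA, hk, kitB, vB0]
        push_cast
        ring
      · -- down i = j
        have hieq : bwDown m (m-a) i = j := by apply Fin.ext; rw [bwDown_val]; omega
        rw [hieq]
        have hps : bwPar m (i:ℕ) + bwPar m (j:ℕ) = 1 := by rw [hc] at hpdI; exact hpdI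
        have hEv : bwExp m (i:ℕ) (j:ℕ) = 2 * (t:ℤ) := by
          have h1 := bwExp_flip m (j:ℕ) (j:ℕ) (m-a) hbm (by rw [← hc]; exact hbdi)
          rw [show (j:ℕ) + 2^(m-a) = (i:ℕ) by omega,
            (by rw [← hc]; exact hbdi : bwBit (j:ℕ) (m-a) = 0),
            bwExp_diag m (j:ℕ) hmo] at h1
          push_cast at h1 ⊢
          omega
        have vB : (2:ℝ) ^ bwPar m (i:ℕ) * bwH m j j = Real.sqrt 2 ^ (2 * (t:ℤ)) := by
          rw [bwH_eval_diag m j, bwExp_diag m (j:ℕ) hmo, kitA]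
          congr 1
          have : (bwPar m (i:ℕ) : ℤ) + (bwPar m (j:ℕ) : ℤ) = 1 := by exact_mod_cast hps
          omega
        refine ⟨2 ^ (t-1), ?_⟩
        rw [vA, hEv, vB, kitB]
        have h2t : ((2:ℤ)^t : ℤ) = 2 * 2^(t-1) := by
          rw [← pow_succ']; congr 1; omega
        push_cast [h2t]
        ring
      · -- down i > j : zero
        have hlt : (j:ℕ) < ((bwDown m (m-a) i : ℕ)) := by rw [bwDown_val]; omega
        have hEdi : bwExp m ((i:ℕ) - 2^(m-a)) (j:ℕ)
            = bwExp m (i:ℕ) (j:ℕ) + 2 - 2 * (bwPar m (i:ℕ):ℤ) := by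
          have h1 := bwExp_flip m ((i:ℕ) - 2^(m-a)) (j:ℕ) (m-a) hbm hbdi
          rw [hdi, hj0] at h1
          push_cast at h1
          omega
        have vB : (2:ℝ) ^ bwPar m (i:ℕ) * bwH m (bwDown m (m-a) i) j
            = 2 * Real.sqrt 2 ^ bwExp m (i:ℕ) (j:ℕ) := by
          rw [bwH_eval_lt m (bwDown m (m-a) i) j hlt, bwDown_val, hEdi, kitA,
            show bwExp m (i:ℕ) (j:ℕ) + 2 - 2 * (bwPar m (i:ℕ):ℤ) + 2 * (bwPar m (i:ℕ):ℤ)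
              = bwExp m (i:ℕ) (j:ℕ) + 2 by ring, kitC]
        exact ⟨0, by push_cast; linear_combination 2 * vA - vB⟩
    case inr => -- bits (1,1): both active
      have hj1 : bwBit (j:ℕ) (m-a) = 1 := by omega
      rw [if_pos hj1, hGij]
      have hdj : (j:ℕ) - 2^(m-a) + 2^(m-a) = (j:ℕ) := by
        have := bwBit_one_le (j:ℕ) (m-a) hj1; omega
      have hbdj : bwBit ((j:ℕ) - 2^(m-a)) (m-a) = 0 := bwBit_sub_pow (j:ℕ) (m-a) hj1
      have hpdJ : bwPar m (j:ℕ) + bwPar m ((j:ℕ) - 2^(m-a)) = 1 := by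
        have := bwPar_add_pow m ((j:ℕ) - 2^(m-a)) (m-a) hbm hbdj
        rw [hdj] at this; exact this
      have hpdJ' : (bwPar m (j:ℕ) : ℤ) + (bwPar m ((j:ℕ) - 2^(m-a)) : ℤ) = 1 := by
        exact_mod_cast hpdJ
      have hGiD : bwG2 m a i (bwDown m (m-a) j) =
          -(bwH m i (bwDown m (m-a) j)) +
            2 ^ bwPar m (i:ℕ) * bwH m (bwDown m (m-a) i) (bwDown m (m-a) j) := by
        unfold bwG2; rw [if_pos hi1]
      rw [hGiD]
      -- C := bwH i (down j) : i > down j always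
      have hEdj : bwExp m (i:ℕ) ((j:ℕ) - 2^(m-a))
          = bwExp m (i:ℕ) (j:ℕ) - 2 * (bwPar m (j:ℕ):ℤ) := by
        have h1 := bwExp_flip m ((j:ℕ) - 2^(m-a)) (i:ℕ) (m-a) hbm hbdj
        rw [hdj, hi1] at h1
        have hc1 := bwExp_comm m (j:ℕ) (i:ℕ)
        have hc2 := bwExp_comm m ((j:ℕ) - 2^(m-a)) (i:ℕ)
        push_cast at h1
        omega
      have hltC : ((bwDown m (m-a) j : ℕ)) < (i:ℕ) := by rw [bwDown_val]; omega
      have vC : (2:ℝ) ^ bwPar m (j:ℕ) * bwH m i (bwDown m (m-a) j)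
          = Real.sqrt 2 ^ bwExp m (i:ℕ) (j:ℕ) := by
        rw [bwH_eval_lt m i (bwDown m (m-a) j) hltC, bwDown_val, hEdj, kitA,
          show bwExp m (i:ℕ) (j:ℕ) - 2 * (bwPar m (j:ℕ):ℤ) + 2 * (bwPar m (j:ℕ):ℤ)
            = bwExp m (i:ℕ) (j:ℕ) by ring]
      -- D := bwH (down i) (down j)
      have hEdd : bwExp m ((i:ℕ) - 2^(m-a)) ((j:ℕ) - 2^(m-a))
          = bwExp m (i:ℕ) (j:ℕ) - 2 * (bwPar m (j:ℕ):ℤ) + 2 - 2 * (bwPar m (i:ℕ):ℤ) := by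
        have h1 := bwExp_flip m ((i:ℕ) - 2^(m-a)) ((j:ℕ) - 2^(m-a)) (m-a) hbm hbdi
        rw [hdi, hbdj] at h1
        push_cast at h1
        omega
      have hltD : ((bwDown m (m-a) j : ℕ)) < ((bwDown m (m-a) i : ℕ)) := by
        rw [bwDown_val, bwDown_val]
        have := bwBit_one_le (i:ℕ) (m-a) hi1
        have := bwBit_one_le (j:ℕ) (m-a) hj1
        omega
      have vD : (2:ℝ) ^ bwPar m (j:ℕ) *
          ((2:ℝ) ^ bwPar m (i:ℕ) * bwH m (bwDown m (m-a) i) (bwDown m (m-a) j))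
          = 2 * Real.sqrt 2 ^ bwExp m (i:ℕ) (j:ℕ) := by
        rw [bwH_eval_lt m (bwDown m (m-a) i) (bwDown m (m-a) j) hltD, bwDown_val, bwDown_val,
          hEdd, kitA,
          show bwExp m (i:ℕ) (j:ℕ) - 2 * (bwPar m (j:ℕ):ℤ) + 2 - 2 * (bwPar m (i:ℕ):ℤ)
            + 2 * (bwPar m (i:ℕ):ℤ) = bwExp m (i:ℕ) (j:ℕ) - 2 * (bwPar m (j:ℕ):ℤ) + 2
            by ring, kitA,
          show bwExp m (i:ℕ) (j:ℕ) - 2 * (bwPar m (j:ℕ):ℤ) + 2 + 2 * (bwPar m (j:ℕ):ℤ)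
            = bwExp m (i:ℕ) (j:ℕ) + 2 by ring, kitC]
      rcases lt_trichotomy ((i:ℕ) - 2^(m-a)) (j:ℕ) with hc | hc | hc
      · -- down i < j : M = -√2^E, close pair
        have hgt : ((bwDown m (m-a) i : ℕ)) < (j:ℕ) := by rw [bwDown_val]; omega
        have vB0 : bwH m (bwDown m (m-a) i) j = 0 :=
          bwH_eval_gt m (bwDown m (m-a) i) j hgt
        obtain ⟨k, hk, hk1⟩ := bwExp_two_pos m (i:ℕ) (j:ℕ) (m-a) hmo hb2
          (bwClose (i:ℕ) (j:ℕ) (m-a) hIJ (by omega) (by omega))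
        obtain ⟨k', rfl⟩ : ∃ k', k = k' + 1 := ⟨k - 1, by omega⟩
        refine ⟨-2 ^ k', ?_⟩
        have vAk : bwH m i j = (2:ℝ) ^ (k'+1) := by rw [vA, hk, kitB]; push_cast; ring
        have vCk : (2:ℝ) ^ bwPar m (j:ℕ) * bwH m i (bwDown m (m-a) j) = (2:ℝ) ^ (k'+1) := by
          rw [vC, hk, kitB]; push_cast; ring
        have vDk : (2:ℝ) ^ bwPar m (j:ℕ) *
            ((2:ℝ) ^ bwPar m (i:ℕ) * bwH m (bwDown m (m-a) i) (bwDown m (m-a) j))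
            = 2 * (2:ℝ) ^ (k'+1) := by rw [vD, hk, kitB]; push_cast; ring
        push_cast
        linear_combination (2:ℝ) ^ bwPar m (i:ℕ) * vB0 + vCk - vDk
      · -- down i = j : impossible bit mismatch
        exfalso
        rw [hc] at hbdi
        omega
      · -- down i > j : zero
        have hlt : (j:ℕ) < ((bwDown m (m-a) i : ℕ)) := by rw [bwDown_val]; omega
        have hEdi : bwExp m ((i:ℕ) - 2^(m-a)) (j:ℕ)
            = bwExp m (i:ℕ) (j:ℕ) - 2 * (bwPar m (i:ℕ):ℤ) := by
          have h1 := bwExp_flip m ((i:ℕ) - 2^(m-a)) (j:ℕ) (m-a) hbm hbdi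
          rw [hdi, hj1] at h1
          push_cast at h1
          omega
        have vB : (2:ℝ) ^ bwPar m (i:ℕ) * bwH m (bwDown m (m-a) i) j
            = Real.sqrt 2 ^ bwExp m (i:ℕ) (j:ℕ) := by
          rw [bwH_eval_lt m (bwDown m (m-a) i) j hlt, bwDown_val, hEdi, kitA,
            show bwExp m (i:ℕ) (j:ℕ) - 2 * (bwPar m (i:ℕ):ℤ) + 2 * (bwPar m (i:ℕ):ℤ)
              = bwExp m (i:ℕ) (j:ℕ) by ring]
        exact ⟨0, by push_cast; linear_combination vB + vC - vD⟩


/-- For `m ≥ 5` odd, `r ∈ {1,2}` and `a ∈ {2, …, m}`, `u_{Σ_{ar}}(α) = 1` for all `α`. -/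
theorem bwU_trivial_odd_case (m : ℕ) (hm : 5 ≤ m) (hmo : Odd m) (a r : ℕ)
    (ha : 2 ≤ a) (ha' : a ≤ m) (hr : r = 1 ∨ r = 2) (α : Fin (2 ^ m) → ℤ) :
    bwU m (bwSigma m a r) α = 1 := by
  have key : ∀ i j : Fin (2^m), j < i → ∃ z : ℤ, bwBMat m (bwSigma m a r) i j = 2 * z := by
    rcases hr with rfl | rfl
    · exact bwKey1 m a hm hmo ha ha'
    · exact bwKey2 m a hm hmo ha ha'
  have hterm : ∀ i j : Fin (2^m), ∃ z : ℤ,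
      (if j < i then (α i : ℝ) * (α j : ℝ) * bwBMat m (bwSigma m a r) i j else 0)
        = 2 * (z : ℝ) := by
    intro i j
    by_cases h : j < i
    · obtain ⟨z, hz⟩ := key i j h
      refine ⟨α i * α j * z, ?_⟩
      rw [if_pos h, hz]
      push_cast
      ring
    · exact ⟨0, by rw [if_neg h]; norm_num⟩
  choose z hz using hterm
  have h1 : bwBQuad m (bwSigma m a r) α α = ((2 * ∑ i, ∑ j, z i j : ℤ) : ℝ) := by
    unfold bwBQuad
    rw [Finset.sum_congr rfl fun i _ => Finset.sum_congr rfl fun j _ => hz i j]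
    push_cast
    rw [Finset.mul_sum]
    exact Finset.sum_congr rfl fun i _ => by rw [Finset.mul_sum]
  unfold bwU
  rw [h1, show Real.pi * ((2 * ∑ i, ∑ j, z i j : ℤ) : ℝ)
    = ((∑ i, ∑ j, z i j : ℤ) : ℝ) * (2 * Real.pi) by push_cast; ring,
    Real.cos_int_mul_two_pi]
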